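/- For 0 < q < 1 and α, λ > -1, evaluating the q-beta type integral at a = 0 gives ∫_0^x t^{p-1}(x^p-(qt)^p)_{q^p}^(α-1) t^{pλ} d_q t = (1/[p]_q) B_{q^p}(α, λ+1) x^{p(α+λ)}, where B_q(s,t) = Γ_q(s)Γ_q(t)/Γ_q(s+t) is the q-beta function. -/

import Mathlib

noncomputable section

open scoped Topology

/-- q-shifted factorial `(a;q)_∞ = ∏_{j≥0} (1 - a q^j)`. -/
def qPochInf (a q : ℝ) : ℝ := ∏' j : ℕ, (1 - a * q ^ j)

/-- q-number `[a]_q = (1-q^a)/(1-q)`. -/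
def qNum (a q : ℝ) : ℝ := (1 - q ^ a) / (1 - q)

/-- generalized q-exponent `(X - Y)_{q'}^{(α)} = X^α (Y/X;q')_∞ / (q'^α Y/X;q')_∞`. -/
def qExpGen (q' α X Y : ℝ) : ℝ := X ^ α * qPochInf (Y / X) q' / qPochInf (q' ^ α * (Y / X)) q'

/-- `(x^p - y^p)_{q^p}^{(α)}`. -/
def genExp (p q α x y : ℝ) : ℝ := qExpGen (q ^ p) α (x ^ p) (y ^ p)

/-- Jackson q-integral `∫_0^b f d_q t = (1-q) b ∑_{i≥0} q^i f(q^i b)`. -/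
def jackson0 (q b : ℝ) (f : ℝ → ℝ) : ℝ := (1 - q) * b * ∑' i : ℕ, q ^ i * f (q ^ i * b)

/-- Jackson q-integral `∫_a^b f d_q t`. -/
def jacksonI (q a b : ℝ) (f : ℝ → ℝ) : ℝ := jackson0 q b f - jackson0 q a f

/-- q-Gamma function `Γ_q(t) = (q;q)_∞ (1-q)^{1-t} / (q^t;q)_∞`. -/
def qGammaF (q t : ℝ) : ℝ := qPochInf q q * (1 - q) ^ (1 - t) / qPochInf (q ^ t) q

/-- q-derivative `D_q f(x) = (f(x)-f(qx))/((1-q)x)`. -/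
def qDeriv (q : ℝ) (f : ℝ → ℝ) (x : ℝ) : ℝ := (f x - f (q * x)) / ((1 - q) * x)

/-- generalized q-fractional integral `J_{a+,p,q}^β`. -/
def Jfrac (q p β a : ℝ) (g : ℝ → ℝ) (x : ℝ) : ℝ :=
  qNum p q ^ (1 - β) / qGammaF (q ^ p) β *
    jacksonI q a x (fun w => w ^ (p - 1) * g w * genExp p q (β - 1) x (w * q))

/-- Riemann–Liouville type generalized q-fractional derivative `D_{a+,p,q}^α`. -/
def RLfrac (q p α a : ℝ) (f : ℝ → ℝ) (x : ℝ) : ℝ :=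
  qNum p q ^ α / qGammaF (q ^ p) (1 - α) *
    (x ^ (1 - p) *
      qDeriv q
        (fun t => jacksonI q a t (fun w => w ^ (p - 1) * f w * genExp p q (-α) t (w * q))) x)

/-- Caputo type generalized q-fractional derivative `ᶜD_{a+,p,q}^α f = D_{a+,p,q}^α (f - f a)`. -/
def caputoFrac (q p α a : ℝ) (f : ℝ → ℝ) (x : ℝ) : ℝ :=
  RLfrac q p α a (fun t => f t - f a) x

/-- successive approximations: `succApprox 0 = ζ` (i.e. φ₁), `succApprox (n+1) = φ_{n+2}`. -/
def succApprox (q p α a ζ : ℝ) (f : ℝ → ℝ → ℝ) : ℕ → ℝ → ℝ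
  | 0 => fun _ => ζ
  | n + 1 => fun t => ζ +
      qNum p q ^ (1 - α) / qGammaF (q ^ p) α *
        jacksonI q a t
          (fun w => w ^ (p - 1) * f w (succApprox q p α a ζ f n w) * genExp p q (α - 1) t (w * q))

set_option maxHeartbeats 1000000
namespace QB
open Real Finset

variable {Q a : ℝ}

lemma factor_pos (hQ0 : 0 < Q) (hQ1 : Q < 1) (ha0 : 0 ≤ a) (ha1 : a < 1) (j : ℕ) :
    0 < 1 - a * Q ^ j := by
  have h1 : Q ^ j ≤ 1 := pow_le_one₀ hQ0.le hQ1.le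
  nlinarith [pow_pos hQ0 j]

lemma log_summable (hQ0 : 0 < Q) (hQ1 : Q < 1) (ha0 : 0 ≤ a) (ha1 : a < 1) :
    Summable fun j : ℕ => Real.log (1 - a * Q ^ j) := by
  rw [← summable_neg_iff]
  refine Summable.of_nonneg_of_le (fun j => ?_) (fun j => ?_)
    ((summable_geometric_of_lt_one hQ0.le hQ1).mul_left (a / (1 - a)))
  · have := factor_pos hQ0 hQ1 ha0 ha1 j
    have h2 : 1 - a * Q ^ j ≤ 1 := by nlinarith [pow_pos hQ0 j]
    simp only [neg_nonneg]
    exact Real.log_nonpos this.le h2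
  · have hf := factor_pos hQ0 hQ1 ha0 ha1 j
    have h1 : Q ^ j ≤ 1 := pow_le_one₀ hQ0.le hQ1.le
    have hle : a * Q ^ j ≤ a := by nlinarith
    have : -Real.log (1 - a * Q ^ j) = Real.log (1 - a * Q ^ j)⁻¹ := (Real.log_inv _).symm
    rw [this]
    have h2 : Real.log (1 - a * Q ^ j)⁻¹ ≤ (1 - a * Q ^ j)⁻¹ - 1 :=
      Real.log_le_sub_one_of_pos (by positivity)
    have h3 : (1 - a * Q ^ j)⁻¹ - 1 = a * Q ^ j / (1 - a * Q ^ j) := by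
      field_simp
      ring
    have h4 : a * Q ^ j / (1 - a * Q ^ j) ≤ a * Q ^ j / (1 - a) := by
      apply div_le_div_of_nonneg_left (by positivity) (by linarith) (by nlinarith)
    calc Real.log (1 - a * Q ^ j)⁻¹ ≤ a * Q ^ j / (1 - a * Q ^ j) := by linarith
      _ ≤ a * Q ^ j / (1 - a) := h4
      _ = a / (1 - a) * Q ^ j := by ring

lemma poch_exp (hQ0 : 0 < Q) (hQ1 : Q < 1) (ha0 : 0 ≤ a) (ha1 : a < 1) :
    qPochInf a Q = Real.exp (∑' j : ℕ, Real.log (1 - a * Q ^ j)) := by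
  have h := Real.rexp_tsum_eq_tprod (f := fun j : ℕ => 1 - a * Q ^ j)
    (fun j => factor_pos hQ0 hQ1 ha0 ha1 j) (log_summable hQ0 hQ1 ha0 ha1)
  exact h.symm

lemma poch_pos (hQ0 : 0 < Q) (hQ1 : Q < 1) (ha0 : 0 ≤ a) (ha1 : a < 1) :
    0 < qPochInf a Q := by
  rw [poch_exp hQ0 hQ1 ha0 ha1]; exact Real.exp_pos _

lemma poch_le_one (hQ0 : 0 < Q) (hQ1 : Q < 1) (ha0 : 0 ≤ a) (ha1 : a < 1) :
    qPochInf a Q ≤ 1 := by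
  rw [poch_exp hQ0 hQ1 ha0 ha1]
  have h : (∑' j : ℕ, Real.log (1 - a * Q ^ j)) ≤ 0 := by
    apply tsum_nonpos
    intro j
    have := factor_pos hQ0 hQ1 ha0 ha1 j
    have h1 : Q ^ j ≤ 1 := pow_le_one₀ hQ0.le hQ1.le
    exact Real.log_nonpos this.le (by nlinarith [pow_pos hQ0 j])
  calc Real.exp _ ≤ Real.exp 0 := Real.exp_le_exp.2 h
    _ = 1 := Real.exp_zero

lemma poch_hasProd (hQ0 : 0 < Q) (hQ1 : Q < 1) (ha0 : 0 ≤ a) (ha1 : a < 1) :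
    HasProd (fun j : ℕ => 1 - a * Q ^ j) (qPochInf a Q) := by
  rw [poch_exp hQ0 hQ1 ha0 ha1]
  exact Real.hasProd_of_hasSum_log (f := fun j : ℕ => 1 - a * Q ^ j)
    (fun j => factor_pos hQ0 hQ1 ha0 ha1 j)
    (log_summable hQ0 hQ1 ha0 ha1).hasSum

lemma poch_split (hQ0 : 0 < Q) (hQ1 : Q < 1) (ha0 : 0 ≤ a) (ha1 : a < 1) (n : ℕ) :
    qPochInf a Q = (∏ j ∈ range n, (1 - a * Q ^ j)) * qPochInf (a * Q ^ n) Q := by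
  have han0 : 0 ≤ a * Q ^ n := by positivity
  have han1 : a * Q ^ n < 1 := by
    have h1 : Q ^ n ≤ 1 := pow_le_one₀ hQ0.le hQ1.le
    nlinarith [pow_pos hQ0 n]
  rw [poch_exp hQ0 hQ1 ha0 ha1, poch_exp hQ0 hQ1 han0 han1]
  rw [← Summable.sum_add_tsum_nat_add n (log_summable hQ0 hQ1 ha0 ha1), Real.exp_add, Real.exp_sum]
  congr 1
  · exact Finset.prod_congr rfl fun j _ => Real.exp_log (factor_pos hQ0 hQ1 ha0 ha1 j)
  · congr 1
    apply tsum_congr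
    intro j
    congr 2
    rw [pow_add]
    ring

/-- coefficients of the q-binomial series -/
def qbc (A Q : ℝ) (i : ℕ) : ℝ := ∏ j ∈ range i, ((1 - A * Q ^ j) / (1 - Q ^ (j + 1)))

variable {A z : ℝ}

lemma qbc_rec (hQ0 : 0 < Q) (hQ1 : Q < 1) (i : ℕ) :
    qbc A Q (i + 1) * (1 - Q ^ (i + 1)) = qbc A Q i * (1 - A * Q ^ i) := by
  have h : (0:ℝ) < 1 - Q ^ (i + 1) := by
    have : Q ^ (i+1) < 1 := pow_lt_one₀ (n := i+1) hQ0.le hQ1 (by omega); linarith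
  rw [qbc, Finset.prod_range_succ, ← qbc]
  field_simp

lemma qbc_pos (hQ0 : 0 < Q) (hQ1 : Q < 1) (hA0 : 0 ≤ A) (hA1 : A < 1) (i : ℕ) :
    0 < qbc A Q i := by
  apply Finset.prod_pos
  intro j _
  have h1 := factor_pos hQ0 hQ1 hA0 hA1 j
  have h2 : Q ^ (j+1) < 1 := pow_lt_one₀ (n := j+1) hQ0.le hQ1 (by omega)
  exact div_pos h1 (by linarith)

lemma qbc_le (hQ0 : 0 < Q) (hQ1 : Q < 1) (hA0 : 0 ≤ A) (hA1 : A < 1) (i : ℕ) :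
    qbc A Q i ≤ (qPochInf Q Q)⁻¹ := by
  have hPQ : 0 < qPochInf Q Q := poch_pos hQ0 hQ1 hQ0.le hQ1
  have hD : qPochInf Q Q ≤ ∏ j ∈ range i, (1 - Q * Q ^ j) := by
    have := poch_split hQ0 hQ1 hQ0.le hQ1 i
    have hle := poch_le_one hQ0 hQ1 (a := Q * Q ^ i) (by positivity)
      (by have h1 : Q ^ i ≤ 1 := pow_le_one₀ hQ0.le hQ1.le; nlinarith [pow_pos hQ0 i])
    have hprodpos : 0 < ∏ j ∈ range i, (1 - Q * Q ^ j) :=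
      Finset.prod_pos fun j _ => factor_pos hQ0 hQ1 hQ0.le hQ1 j
    nlinarith [poch_pos hQ0 hQ1 (a := Q * Q ^ i) (by positivity)
      (by have h1 : Q ^ i ≤ 1 := pow_le_one₀ hQ0.le hQ1.le; nlinarith [pow_pos hQ0 i])]
  have hDpos : 0 < ∏ j ∈ range i, (1 - Q * Q ^ j) :=
    Finset.prod_pos fun j _ => factor_pos hQ0 hQ1 hQ0.le hQ1 j
  have hN : ∏ j ∈ range i, (1 - A * Q ^ j) ≤ 1 := by
    apply Finset.prod_le_one
    · intro j _; exact (factor_pos hQ0 hQ1 hA0 hA1 j).le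
    · intro j _
      have : 0 ≤ A * Q ^ j := by positivity
      linarith
  have heq : qbc A Q i = (∏ j ∈ range i, (1 - A * Q ^ j)) / ∏ j ∈ range i, (1 - Q * Q ^ j) := by
    rw [qbc, ← Finset.prod_div_distrib]
    exact Finset.prod_congr rfl fun j _ => by rw [pow_succ']
  rw [heq]
  rw [div_le_iff₀ hDpos, inv_mul_eq_div, le_div_iff₀ hPQ]
  calc (∏ j ∈ range i, (1 - A * Q ^ j)) * qPochInf Q Q ≤ 1 * (∏ j ∈ range i, (1 - Q * Q ^ j)) := by
        apply mul_le_mul hN hD hPQ.le zero_le_one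
    _ = ∏ j ∈ range i, (1 - Q * Q ^ j) := one_mul _

lemma qbs_summable (hQ0 : 0 < Q) (hQ1 : Q < 1) (hA0 : 0 ≤ A) (hA1 : A < 1)
    (hz0 : 0 ≤ z) (hz1 : z < 1) : Summable (fun i : ℕ => qbc A Q i * z ^ i) := by
  refine Summable.of_nonneg_of_le (fun i => ?_) (fun i => ?_)
    ((summable_geometric_of_lt_one hz0 hz1).mul_left ((qPochInf Q Q)⁻¹))
  · exact mul_nonneg (qbc_pos hQ0 hQ1 hA0 hA1 i).le (by positivity)
  · exact mul_le_mul_of_nonneg_right (qbc_le hQ0 hQ1 hA0 hA1 i) (by positivity)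

lemma qbs_FE (hQ0 : 0 < Q) (hQ1 : Q < 1) (hA0 : 0 ≤ A) (hA1 : A < 1)
    (hz0 : 0 ≤ z) (hz1 : z < 1) :
    (1 - z) * ∑' i : ℕ, qbc A Q i * z ^ i
      = (1 - A * z) * ∑' i : ℕ, qbc A Q i * (Q * z) ^ i := by
  have hQz0 : 0 ≤ Q * z := by positivity
  have hQz1 : Q * z < 1 := by nlinarith
  have hf := qbs_summable hQ0 hQ1 hA0 hA1 hz0 hz1
  have hg := qbs_summable hQ0 hQ1 hA0 hA1 hQz0 hQz1
  have key : ∑' i : ℕ, (qbc A Q i * z ^ i - qbc A Q i * (Q * z) ^ i)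
      = ∑' i : ℕ, (z * (qbc A Q i * z ^ i) - A * z * (qbc A Q i * (Q * z) ^ i)) := by
    rw [Summable.tsum_eq_zero_add (hf.sub hg)]
    have h0 : qbc A Q 0 * z ^ 0 - qbc A Q 0 * (Q * z) ^ 0 = 0 := by simp
    rw [h0, zero_add]
    apply tsum_congr
    intro i
    have hrec := qbc_rec (A := A) hQ0 hQ1 i
    rw [mul_pow, mul_pow]
    linear_combination z ^ (i + 1) * hrec
  have e1 : ∑' i : ℕ, (qbc A Q i * z ^ i - qbc A Q i * (Q * z) ^ i)
      = (∑' i : ℕ, qbc A Q i * z ^ i) - ∑' i : ℕ, qbc A Q i * (Q * z) ^ i := Summable.tsum_sub hf hg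
  have e2 : ∑' i : ℕ, (z * (qbc A Q i * z ^ i) - A * z * (qbc A Q i * (Q * z) ^ i))
      = z * (∑' i : ℕ, qbc A Q i * z ^ i) - A * z * ∑' i : ℕ, qbc A Q i * (Q * z) ^ i := by
    rw [Summable.tsum_sub (hf.mul_left z) (hg.mul_left (A * z)), tsum_mul_left, tsum_mul_left]
  rw [e1, e2] at key
  linarith [key]

lemma qbs_iter (hQ0 : 0 < Q) (hQ1 : Q < 1) (hA0 : 0 ≤ A) (hA1 : A < 1)
    (hz0 : 0 ≤ z) (hz1 : z < 1) (N : ℕ) :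
    (∏ j ∈ range N, (1 - z * Q ^ j)) * ∑' i : ℕ, qbc A Q i * z ^ i
      = (∏ j ∈ range N, (1 - A * z * Q ^ j)) * ∑' i : ℕ, qbc A Q i * (z * Q ^ N) ^ i := by
  induction N with
  | zero => simp
  | succ N ih =>
    have hw0 : 0 ≤ z * Q ^ N := by positivity
    have hw1 : z * Q ^ N < 1 := by
      have h1 : Q ^ N ≤ 1 := pow_le_one₀ hQ0.le hQ1.le
      nlinarith [pow_pos hQ0 N]
    have hFE := qbs_FE (A := A) hQ0 hQ1 hA0 hA1 hw0 hw1
    have harg : ∀ i : ℕ, qbc A Q i * (Q * (z * Q ^ N)) ^ i = qbc A Q i * (z * Q ^ (N+1)) ^ i := by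
      intro i; congr 2; ring
    rw [tsum_congr harg] at hFE
    rw [Finset.prod_range_succ, Finset.prod_range_succ]
    calc (∏ j ∈ range N, (1 - z * Q ^ j)) * (1 - z * Q ^ N) * ∑' i : ℕ, qbc A Q i * z ^ i
        = (1 - z * Q ^ N) * ((∏ j ∈ range N, (1 - z * Q ^ j)) * ∑' i : ℕ, qbc A Q i * z ^ i) := by
          ring
      _ = (1 - z * Q ^ N) * ((∏ j ∈ range N, (1 - A * z * Q ^ j)) *
            ∑' i : ℕ, qbc A Q i * (z * Q ^ N) ^ i) := by rw [ih]
      _ = (∏ j ∈ range N, (1 - A * z * Q ^ j)) *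
            ((1 - z * Q ^ N) * ∑' i : ℕ, qbc A Q i * (z * Q ^ N) ^ i) := by ring
      _ = (∏ j ∈ range N, (1 - A * z * Q ^ j)) *
            ((1 - A * (z * Q ^ N)) * ∑' i : ℕ, qbc A Q i * (z * Q ^ (N+1)) ^ i) := by rw [hFE]
      _ = (∏ j ∈ range N, (1 - A * z * Q ^ j)) * (1 - A * z * Q ^ N) *
            ∑' i : ℕ, qbc A Q i * (z * Q ^ (N+1)) ^ i := by ring

lemma qbs_dist (hQ0 : 0 < Q) (hQ1 : Q < 1) (hA0 : 0 ≤ A) (hA1 : A < 1)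
    (hz0 : 0 ≤ z) (hz1 : z < 1) {w : ℝ} (hw0 : 0 ≤ w) (hwz : w ≤ z) :
    (∑' i : ℕ, qbc A Q i * w ^ i) - 1 ∈
      Set.Icc (0:ℝ) ((qPochInf Q Q)⁻¹ * w * (1 - z)⁻¹) := by
  have hw1 : w < 1 := lt_of_le_of_lt hwz hz1
  have hs := qbs_summable hQ0 hQ1 hA0 hA1 hw0 hw1
  have hshift : (∑' i : ℕ, qbc A Q i * w ^ i)
      = 1 + ∑' i : ℕ, qbc A Q (i+1) * w ^ (i+1) := by
    rw [Summable.tsum_eq_zero_add hs]; simp [qbc]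
  have hs' : Summable (fun i : ℕ => qbc A Q (i+1) * w ^ (i+1)) :=
    (summable_nat_add_iff 1).2 hs
  constructor
  · rw [hshift]
    have : 0 ≤ ∑' i : ℕ, qbc A Q (i+1) * w ^ (i+1) :=
      tsum_nonneg fun i => mul_nonneg (qbc_pos hQ0 hQ1 hA0 hA1 _).le (by positivity)
    linarith
  · rw [hshift]
    have hb : ∀ i : ℕ, qbc A Q (i+1) * w ^ (i+1) ≤ (qPochInf Q Q)⁻¹ * w * z ^ i := by
      intro i
      have h1 : qbc A Q (i+1) ≤ (qPochInf Q Q)⁻¹ := qbc_le hQ0 hQ1 hA0 hA1 _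
      have h2 : w ^ (i+1) ≤ w * z ^ i := by
        rw [pow_succ']
        exact mul_le_mul_of_nonneg_left (pow_le_pow_left₀ hw0 hwz i) hw0
      have hPinv : (0:ℝ) ≤ (qPochInf Q Q)⁻¹ := by
        have := poch_pos hQ0 hQ1 hQ0.le hQ1; positivity
      calc qbc A Q (i+1) * w ^ (i+1) ≤ (qPochInf Q Q)⁻¹ * w ^ (i+1) :=
            mul_le_mul_of_nonneg_right h1 (by positivity)
        _ ≤ (qPochInf Q Q)⁻¹ * (w * z ^ i) := mul_le_mul_of_nonneg_left h2 hPinv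
        _ = (qPochInf Q Q)⁻¹ * w * z ^ i := by ring
    have hsb : Summable (fun i : ℕ => (qPochInf Q Q)⁻¹ * w * z ^ i) :=
      (summable_geometric_of_lt_one hz0 hz1).mul_left _
    have hT := Summable.tsum_le_tsum hb hs' hsb
    have hgeo : ∑' i : ℕ, (qPochInf Q Q)⁻¹ * w * z ^ i
        = (qPochInf Q Q)⁻¹ * w * (1 - z)⁻¹ := by
      rw [tsum_mul_left, tsum_geometric_of_lt_one hz0 hz1]
    rw [hgeo] at hT
    linarith

lemma qbs_limit (hQ0 : 0 < Q) (hQ1 : Q < 1) (hA0 : 0 ≤ A) (hA1 : A < 1)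
    (hz0 : 0 ≤ z) (hz1 : z < 1) :
    Filter.Tendsto (fun N : ℕ => ∑' i : ℕ, qbc A Q i * (z * Q ^ N) ^ i)
      Filter.atTop (nhds 1) := by
  have key : Filter.Tendsto (fun N : ℕ => (∑' i : ℕ, qbc A Q i * (z * Q ^ N) ^ i) - 1)
      Filter.atTop (nhds 0) := by
    apply squeeze_zero (g := fun N => (qPochInf Q Q)⁻¹ * z * (1 - z)⁻¹ * Q ^ N)
    · intro N
      have h1 : Q ^ N ≤ 1 := pow_le_one₀ hQ0.le hQ1.le
      exact (qbs_dist hQ0 hQ1 hA0 hA1 hz0 hz1 (by positivity)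
        (by nlinarith [pow_pos hQ0 N])).1
    · intro N
      have h1 : Q ^ N ≤ 1 := pow_le_one₀ hQ0.le hQ1.le
      have := (qbs_dist hQ0 hQ1 hA0 hA1 hz0 hz1 (w := z * Q ^ N) (by positivity)
        (by nlinarith [pow_pos hQ0 N])).2
      calc (∑' i : ℕ, qbc A Q i * (z * Q ^ N) ^ i) - 1
          ≤ (qPochInf Q Q)⁻¹ * (z * Q ^ N) * (1 - z)⁻¹ := this
        _ = (qPochInf Q Q)⁻¹ * z * (1 - z)⁻¹ * Q ^ N := by ring
    · have := (tendsto_pow_atTop_nhds_zero_of_lt_one hQ0.le hQ1).const_mul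
        ((qPochInf Q Q)⁻¹ * z * (1 - z)⁻¹)
      simpa using this
  have := key.add_const 1
  simpa using this

/-- the q-binomial theorem -/
theorem qbinomial (hQ0 : 0 < Q) (hQ1 : Q < 1) (hA0 : 0 ≤ A) (hA1 : A < 1)
    (hz0 : 0 ≤ z) (hz1 : z < 1) :
    (∑' i : ℕ, qbc A Q i * z ^ i) * qPochInf z Q = qPochInf (A * z) Q := by
  have hAz0 : 0 ≤ A * z := by positivity
  have hAz1 : A * z < 1 := by nlinarith
  have t1 : Filter.Tendsto (fun N : ℕ => (∏ j ∈ range N, (1 - z * Q ^ j)) *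
      ∑' i : ℕ, qbc A Q i * z ^ i) Filter.atTop
      (nhds (qPochInf z Q * ∑' i : ℕ, qbc A Q i * z ^ i)) :=
    ((poch_hasProd hQ0 hQ1 hz0 hz1).tendsto_prod_nat).mul_const _
  have t2 : Filter.Tendsto (fun N : ℕ => (∏ j ∈ range N, (1 - A * z * Q ^ j)) *
      ∑' i : ℕ, qbc A Q i * (z * Q ^ N) ^ i) Filter.atTop
      (nhds (qPochInf (A * z) Q * 1)) :=
    ((poch_hasProd hQ0 hQ1 hAz0 hAz1).tendsto_prod_nat).mul
      (qbs_limit hQ0 hQ1 hA0 hA1 hz0 hz1)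
  have heq : (fun N : ℕ => (∏ j ∈ range N, (1 - z * Q ^ j)) *
      ∑' i : ℕ, qbc A Q i * z ^ i)
      = fun N : ℕ => (∏ j ∈ range N, (1 - A * z * Q ^ j)) *
        ∑' i : ℕ, qbc A Q i * (z * Q ^ N) ^ i :=
    funext fun N => qbs_iter hQ0 hQ1 hA0 hA1 hz0 hz1 N
  rw [heq] at t1
  have := tendsto_nhds_unique t1 t2
  rw [mul_one] at this
  rw [mul_comm]
  exact this

end QB

namespace QB
open Real Finset

lemma main_term (q p α l x : ℝ) (hq0 : 0 < q) (hq1 : q < 1) (hp : 0 < p)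
    (hα : 0 < α) (hx : 0 < x) (i : ℕ) :
    q ^ i * ((q ^ i * x) ^ (p - 1) * genExp p q (α - 1) x (q * (q ^ i * x)) * (q ^ i * x) ^ (p * l))
      = x ^ (p * (α + l) - 1) * (qPochInf (q ^ p) (q ^ p) / qPochInf ((q ^ p) ^ α) (q ^ p)) *
        (qbc ((q ^ p) ^ α) (q ^ p) i * ((q ^ p) ^ (l + 1)) ^ i) := by
  have hQ0 : 0 < q ^ p := Real.rpow_pos_of_pos hq0 p
  have hQ1 : q ^ p < 1 := Real.rpow_lt_one hq0.le hq1 hp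
  have hA0 : 0 < (q ^ p) ^ α := Real.rpow_pos_of_pos hQ0 α
  have hA1 : (q ^ p) ^ α < 1 := Real.rpow_lt_one hQ0.le hQ1 hα
  have hxp : 0 < x ^ p := Real.rpow_pos_of_pos hx p
  have hqnat : ∀ n : ℕ, ((q : ℝ) ^ n) ^ p = (q ^ p) ^ n := by
    intro n
    rw [← Real.rpow_natCast q n, ← Real.rpow_natCast (q ^ p) n, ← Real.rpow_mul hq0.le,
      ← Real.rpow_mul hq0.le, mul_comm]
  have hy : (q * (q ^ i * x)) ^ p = (q ^ p) ^ (i + 1) * x ^ p := by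
    have e : q * (q ^ i * x) = q ^ (i + 1) * x := by ring
    rw [e, Real.mul_rpow (by positivity) hx.le, hqnat]
  have hgenarg : (q * (q ^ i * x)) ^ p / x ^ p = ((q ^ p) ^ (i + 1) : ℝ) := by
    rw [hy]; field_simp
  have hexp2 : (q ^ p) ^ (α - 1) * ((q ^ p) ^ (i + 1) : ℝ) = (q ^ p) ^ α * (q ^ p) ^ i := by
    rw [← Real.rpow_natCast (q ^ p) (i + 1), ← Real.rpow_natCast (q ^ p) i,
      ← Real.rpow_add hQ0, ← Real.rpow_add hQ0]
    congr 1; push_cast; ring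
  have hxpa : (x ^ p) ^ (α - 1) = x ^ (p * (α - 1)) := (Real.rpow_mul hx.le _ _).symm
  have hgen : genExp p q (α - 1) x (q * (q ^ i * x))
      = x ^ (p * (α - 1)) * qPochInf ((q ^ p) * (q ^ p) ^ i) (q ^ p) /
        qPochInf ((q ^ p) ^ α * (q ^ p) ^ i) (q ^ p) := by
    rw [genExp, qExpGen, hgenarg, hexp2, hxpa, pow_succ']
  have hD0 : 0 < ∏ j ∈ range i, (1 - (q ^ p) * (q ^ p) ^ j) :=
    Finset.prod_pos fun j _ => factor_pos hQ0 hQ1 hQ0.le hQ1 j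
  have hN0 : 0 < ∏ j ∈ range i, (1 - (q ^ p) ^ α * (q ^ p) ^ j) :=
    Finset.prod_pos fun j _ => factor_pos hQ0 hQ1 hA0.le hA1 j
  have hPA0 : 0 < qPochInf ((q ^ p) ^ α) (q ^ p) := poch_pos hQ0 hQ1 hA0.le hA1
  have hPQi : qPochInf ((q ^ p) * (q ^ p) ^ i) (q ^ p)
      = qPochInf (q ^ p) (q ^ p) / ∏ j ∈ range i, (1 - (q ^ p) * (q ^ p) ^ j) := by
    rw [poch_split hQ0 hQ1 hQ0.le hQ1 i]; field_simp
  have hPAi : qPochInf ((q ^ p) ^ α * (q ^ p) ^ i) (q ^ p)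
      = qPochInf ((q ^ p) ^ α) (q ^ p) / ∏ j ∈ range i, (1 - (q ^ p) ^ α * (q ^ p) ^ j) := by
    rw [poch_split hQ0 hQ1 hA0.le hA1 i]; field_simp
  have hqbc : qbc ((q ^ p) ^ α) (q ^ p) i
      = (∏ j ∈ range i, (1 - (q ^ p) ^ α * (q ^ p) ^ j)) /
        ∏ j ∈ range i, (1 - (q ^ p) * (q ^ p) ^ j) := by
    rw [qbc, ← Finset.prod_div_distrib]
    exact Finset.prod_congr rfl fun j _ => by rw [pow_succ']
  have hqi : (q : ℝ) ^ i = q ^ ((i : ℝ)) := (Real.rpow_natCast q i).symm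
  have hsplit1 : (q ^ i * x) ^ (p - 1) = q ^ ((i : ℝ) * (p - 1)) * x ^ (p - 1) := by
    rw [Real.mul_rpow (by positivity) hx.le, ← Real.rpow_natCast q i, ← Real.rpow_mul hq0.le]
  have hsplit2 : (q ^ i * x) ^ (p * l) = q ^ ((i : ℝ) * (p * l)) * x ^ (p * l) := by
    rw [Real.mul_rpow (by positivity) hx.le, ← Real.rpow_natCast q i, ← Real.rpow_mul hq0.le]
  have hqcomb : q ^ ((i : ℝ)) * q ^ ((i : ℝ) * (p - 1)) * q ^ ((i : ℝ) * (p * l))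
      = ((q ^ p) ^ (l + 1)) ^ i := by
    rw [← Real.rpow_add hq0, ← Real.rpow_add hq0, ← Real.rpow_natCast ((q ^ p) ^ (l + 1)) i,
      ← Real.rpow_mul hQ0.le, ← Real.rpow_mul hq0.le]
    congr 1; ring
  have hxcomb : x ^ (p - 1) * x ^ (p * (α - 1)) * x ^ (p * l) = x ^ (p * (α + l) - 1) := by
    rw [← Real.rpow_add hx, ← Real.rpow_add hx]; congr 1; ring
  rw [hgen, hPQi, hPAi, hsplit1, hsplit2, hqbc, hqi]
  calc q ^ ((i:ℝ)) * (q ^ ((i:ℝ) * (p - 1)) * x ^ (p - 1) *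
        (x ^ (p * (α - 1)) * (qPochInf (q ^ p) (q ^ p) / ∏ j ∈ range i, (1 - (q ^ p) * (q ^ p) ^ j)) /
          (qPochInf ((q ^ p) ^ α) (q ^ p) / ∏ j ∈ range i, (1 - (q ^ p) ^ α * (q ^ p) ^ j))) *
        (q ^ ((i:ℝ) * (p * l)) * x ^ (p * l)))
      = (q ^ ((i:ℝ)) * q ^ ((i:ℝ) * (p - 1)) * q ^ ((i:ℝ) * (p * l))) *
        (x ^ (p - 1) * x ^ (p * (α - 1)) * x ^ (p * l)) *
        ((qPochInf (q ^ p) (q ^ p) / ∏ j ∈ range i, (1 - (q ^ p) * (q ^ p) ^ j)) /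
          (qPochInf ((q ^ p) ^ α) (q ^ p) / ∏ j ∈ range i, (1 - (q ^ p) ^ α * (q ^ p) ^ j))) := by
        ring
    _ = ((q ^ p) ^ (l + 1)) ^ i * x ^ (p * (α + l) - 1) *
        ((qPochInf (q ^ p) (q ^ p) / ∏ j ∈ range i, (1 - (q ^ p) * (q ^ p) ^ j)) /
          (qPochInf ((q ^ p) ^ α) (q ^ p) / ∏ j ∈ range i, (1 - (q ^ p) ^ α * (q ^ p) ^ j))) := by
        rw [hqcomb, hxcomb]
    _ = x ^ (p * (α + l) - 1) *
        (qPochInf (q ^ p) (q ^ p) / qPochInf ((q ^ p) ^ α) (q ^ p)) *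
        ((∏ j ∈ range i, (1 - (q ^ p) ^ α * (q ^ p) ^ j)) /
            (∏ j ∈ range i, (1 - (q ^ p) * (q ^ p) ^ j)) * ((q ^ p) ^ (l + 1)) ^ i) := by
        field_simp
end QB

/-- q-Beta function `B_q(s,t) = Γ_q(s)Γ_q(t)/Γ_q(s+t)`. -/
def qBetaF (q s t : ℝ) : ℝ := qGammaF q s * qGammaF q t / qGammaF q (s + t)

open Real Finset QB in
theorem stmt19 (q p α l x : ℝ) (hq0 : 0 < q) (hq1 : q < 1) (hp : 0 < p)
    (hα : 0 < α) (hl : -1 < l) (hx : 0 < x) :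
    jackson0 q x (fun t => t ^ (p - 1) * genExp p q (α - 1) x (q * t) * t ^ (p * l)) =
      1 / qNum p q * qBetaF (q ^ p) α (l + 1) * x ^ (p * (α + l)) := by
  have hQ0 : 0 < q ^ p := Real.rpow_pos_of_pos hq0 p
  have hQ1 : q ^ p < 1 := Real.rpow_lt_one hq0.le hq1 hp
  have hA0 : 0 < (q ^ p) ^ α := Real.rpow_pos_of_pos hQ0 α
  have hA1 : (q ^ p) ^ α < 1 := Real.rpow_lt_one hQ0.le hQ1 hα
  have hz0 : 0 < (q ^ p) ^ (l + 1) := Real.rpow_pos_of_pos hQ0 _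
  have hz1 : (q ^ p) ^ (l + 1) < 1 := Real.rpow_lt_one hQ0.le hQ1 (by linarith)
  have hPQ0 : 0 < qPochInf (q ^ p) (q ^ p) := poch_pos hQ0 hQ1 hQ0.le hQ1
  have hPA0 : 0 < qPochInf ((q ^ p) ^ α) (q ^ p) := poch_pos hQ0 hQ1 hA0.le hA1
  have hPz0 : 0 < qPochInf ((q ^ p) ^ (l + 1)) (q ^ p) := poch_pos hQ0 hQ1 hz0.le hz1
  have hAz0 : 0 ≤ (q ^ p) ^ α * (q ^ p) ^ (l + 1) := by positivity
  have hAz1 : (q ^ p) ^ α * (q ^ p) ^ (l + 1) < 1 := by nlinarith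
  have hPS0 : 0 < qPochInf ((q ^ p) ^ (α + (l + 1))) (q ^ p) :=
    poch_pos hQ0 hQ1 (Real.rpow_pos_of_pos hQ0 _).le
      (Real.rpow_lt_one hQ0.le hQ1 (by linarith))
  have hAzS : (q ^ p) ^ α * (q ^ p) ^ (l + 1) = (q ^ p) ^ (α + (l + 1)) :=
    (Real.rpow_add hQ0 _ _).symm
  -- sum evaluation
  have hsum : (∑' i : ℕ, q ^ i * ((q ^ i * x) ^ (p - 1) *
        genExp p q (α - 1) x (q * (q ^ i * x)) * (q ^ i * x) ^ (p * l)))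
      = x ^ (p * (α + l) - 1) * (qPochInf (q ^ p) (q ^ p) / qPochInf ((q ^ p) ^ α) (q ^ p)) *
        ∑' i : ℕ, qbc ((q ^ p) ^ α) (q ^ p) i * ((q ^ p) ^ (l + 1)) ^ i := by
    rw [← tsum_mul_left]
    exact tsum_congr fun i => main_term q p α l x hq0 hq1 hp hα hx i
  have hqbin := qbinomial hQ0 hQ1 hA0.le hA1 hz0.le hz1
  have hS : (∑' i : ℕ, qbc ((q ^ p) ^ α) (q ^ p) i * ((q ^ p) ^ (l + 1)) ^ i)
      = qPochInf ((q ^ p) ^ (α + (l + 1))) (q ^ p) / qPochInf ((q ^ p) ^ (l + 1)) (q ^ p) := by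
    rw [← hAzS]
    field_simp
    linarith [hqbin]
  have hxx : x * x ^ (p * (α + l) - 1) = x ^ (p * (α + l)) := by
    nth_rewrite 1 [← Real.rpow_one x]
    rw [← Real.rpow_add hx]; congr 1; ring
  have h1Q : (0:ℝ) < 1 - q ^ p := by linarith
  have h1q : (0:ℝ) < 1 - q := by linarith
  have hbeta : qBetaF (q ^ p) α (l + 1)
      = (1 - q ^ p) * qPochInf (q ^ p) (q ^ p) * qPochInf ((q ^ p) ^ (α + (l + 1))) (q ^ p) /
        (qPochInf ((q ^ p) ^ α) (q ^ p) * qPochInf ((q ^ p) ^ (l + 1)) (q ^ p)) := by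
    rw [qBetaF, qGammaF, qGammaF, qGammaF]
    have h1 : (1 - q ^ p) ^ ((1:ℝ) - α) ≠ 0 := (Real.rpow_pos_of_pos h1Q _).ne'
    have h2 : (1 - q ^ p) ^ ((1:ℝ) - (l + 1)) ≠ 0 := (Real.rpow_pos_of_pos h1Q _).ne'
    have h3 : (1 - q ^ p) ^ ((1:ℝ) - (α + (l + 1))) ≠ 0 := (Real.rpow_pos_of_pos h1Q _).ne'
    have hpow : (1 - q ^ p) ^ ((1:ℝ) - α) * (1 - q ^ p) ^ (-l)
        = (1 - q ^ p) * (1 - q ^ p) ^ ((1:ℝ) - (α + (l + 1))) := by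
      have e1 : (1 - q ^ p) * (1 - q ^ p) ^ ((1:ℝ) - (α + (l + 1)))
          = (1 - q ^ p) ^ (1 + ((1:ℝ) - (α + (l + 1)))) := by
        rw [Real.rpow_add h1Q, Real.rpow_one]
      rw [e1, ← Real.rpow_add h1Q]; congr 1; ring
    field_simp
    rw [show (1:ℝ) - (l + 1) = -l by ring]
    exact hpow
  have hqNum : qNum p q = (1 - q ^ p) / (1 - q) := rfl
  rw [jackson0]
  show (1 - q) * x * (∑' i : ℕ, q ^ i * ((q ^ i * x) ^ (p - 1) *
        genExp p q (α - 1) x (q * (q ^ i * x)) * (q ^ i * x) ^ (p * l))) = _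
  rw [hsum, hS, hbeta, hqNum]
  have : (1 - q) * x * (x ^ (p * (α + l) - 1) *
        (qPochInf (q ^ p) (q ^ p) / qPochInf ((q ^ p) ^ α) (q ^ p)) *
        (qPochInf ((q ^ p) ^ (α + (l + 1))) (q ^ p) / qPochInf ((q ^ p) ^ (l + 1)) (q ^ p)))
      = (1 - q) * (x * x ^ (p * (α + l) - 1)) *
        (qPochInf (q ^ p) (q ^ p) / qPochInf ((q ^ p) ^ α) (q ^ p)) *
        (qPochInf ((q ^ p) ^ (α + (l + 1))) (q ^ p) / qPochInf ((q ^ p) ^ (l + 1)) (q ^ p)) := by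
    ring
  rw [this, hxx]
  field_simp
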